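/- Let C ⊆ F_q^I, let (J, J̄) partition I with dim(C|_J) + dim(C|_{J̄}) − dim(C) = r, and let C₁ (on I₁ = J ∪ I_Δ) and C₂ (on I₂ = J̄ ∪ I_Δ) be the codes produced by the generator-matrix r-sum decomposition construction. Then for every J₁ ⊆ J: dim(C₁|_{J₁}) + dim(C₁|_{I₁∖J₁}) − dim(C₁) = dim(C|_{J₁}) + dim(C|_{I∖J₁}) − dim(C). -/

import Mathlib

open Module

/-- Projection of a code along a coordinate-selection map `g : T → ι`. -/
noncomputable def projAlong {F : Type*} [Field F] {ι T : Type*}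
    (C : Submodule F (ι → F)) (g : T → ι) : Submodule F (T → F) :=
  C.map (LinearMap.funLeft F F g)

namespace RSumDecomp

variable {F : Type*} [Field F] {ι ι' κ T : Type*} [Fintype ι] [Fintype ι']

/-- The "row combination" map: `c ↦ ∑ i, c i • v i`. -/
noncomputable def comb (v : ι → κ → F) : (ι → F) →ₗ[F] (κ → F) where
  toFun c := fun k => ∑ i, c i * v i k
  map_add' c d := by funext k; simp [add_mul, Finset.sum_add_distrib]
  map_smul' t c := by funext k; simp [Finset.mul_sum, mul_assoc]

lemma comb_apply (v : ι → κ → F) (c : ι → F) (k : κ) :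
    comb v c k = ∑ i, c i * v i k := rfl

lemma range_comb (v : ι → κ → F) :
    LinearMap.range (comb v) = Submodule.span F (Set.range v) := by
  classical
  apply le_antisymm
  · rintro _ ⟨c, rfl⟩
    have : comb v c = ∑ i, c i • v i := by
      funext k; simp [comb_apply, Finset.sum_apply]
    rw [this]
    exact Submodule.sum_mem _ fun i _ =>
      Submodule.smul_mem _ _ (Submodule.subset_span ⟨i, rfl⟩)
  · rw [Submodule.span_le]
    rintro _ ⟨i, rfl⟩
    refine ⟨Pi.single i 1, ?_⟩
    funext k
    simp [comb_apply, Pi.single_apply, ite_mul]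

lemma finrank_span_add (v : ι → κ → F) :
    finrank F (Submodule.span F (Set.range v)) + finrank F (LinearMap.ker (comb v))
      = Fintype.card ι := by
  rw [← range_comb, LinearMap.finrank_range_add_finrank_ker, Module.finrank_pi]

omit [Fintype ι] in
lemma projAlong_span (v : ι → κ → F) (g : T → κ) :
    projAlong (Submodule.span F (Set.range v)) g
      = Submodule.span F (Set.range fun i => v i ∘ g) := by
  unfold projAlong
  rw [Submodule.map_span, ← Set.range_comp]
  rfl

omit [Fintype ι] [Fintype ι'] in
/-- Extension by zero on the left summand. -/
noncomputable def extL : (ι → F) →ₗ[F] (ι ⊕ ι' → F) where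
  toFun c := Sum.elim c 0
  map_add' c d := by funext i; cases i <;> simp
  map_smul' t c := by funext i; cases i <;> simp

omit [Fintype ι] [Fintype ι'] in
lemma extL_injective : Function.Injective (extL (F := F) (ι := ι) (ι' := ι')) := by
  intro c d h
  funext i
  simpa [extL] using congrFun h (Sum.inl i)

end RSumDecomp

section

variable {F : Type*} [Field F]
  {k₁ k₂' a b m r : ℕ}

/-- The rows of the generator matrix `Ḡ = [[I, A, 0, B], [0, 0, I, C']]` of `C`;
the columns indexed by `J` are `Fin k₁ ⊕ Fin a`, those indexed by `J̄` are
`Fin k₂' ⊕ Fin b`. -/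
noncomputable def rowsG (A : Fin k₁ → Fin a → F) (B : Fin k₁ → Fin b → F)
    (C' : Fin k₂' → Fin b → F) :
    Fin k₁ ⊕ Fin k₂' → ((Fin k₁ ⊕ Fin a) ⊕ (Fin k₂' ⊕ Fin b)) → F :=
  Sum.elim
    (fun i => Sum.elim (Sum.elim (fun i' => if i = i' then 1 else 0) (A i))
      (Sum.elim (fun _ => 0) (B i)))
    (fun i => Sum.elim (fun _ => 0)
      (Sum.elim (fun i' => if i = i' then 1 else 0) (C' i)))

/-- The rows of the generator matrix `G₁ = [I, A, X]` of `C₁`, on the column index set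
`J ∪ I_Δ = (Fin k₁ ⊕ Fin a) ⊕ Fin m`; here `X i k = ∑ j, α i j * D j k`. -/
noncomputable def rowsG1 (A : Fin k₁ → Fin a → F) (D : Fin r → Fin m → F)
    (α : Fin k₁ → Fin r → F) :
    Fin k₁ → ((Fin k₁ ⊕ Fin a) ⊕ Fin m) → F :=
  fun i => Sum.elim (Sum.elim (fun i' => if i = i' then 1 else 0) (A i))
    (fun k => ∑ j, α i j * D j k)

/-- The rows of the generator matrix `G₂ = [[X, 0, B], [0, I, C']]` of `C₂`, on the column
index set `I_Δ ∪ J̄ = Fin m ⊕ (Fin k₂' ⊕ Fin b)`. -/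
noncomputable def rowsG2 (B : Fin k₁ → Fin b → F) (C' : Fin k₂' → Fin b → F)
    (D : Fin r → Fin m → F) (α : Fin k₁ → Fin r → F) :
    Fin k₁ ⊕ Fin k₂' → (Fin m ⊕ (Fin k₂' ⊕ Fin b)) → F :=
  Sum.elim
    (fun i => Sum.elim (fun k => ∑ j, α i j * D j k) (Sum.elim (fun _ => 0) (B i)))
    (fun i => Sum.elim (fun _ => 0)
      (Sum.elim (fun i' => if i = i' then 1 else 0) (C' i)))

/-- with `C`, `C₁`, `C₂` as produced by the generator-matrix `r`-sum
decomposition construction, for every `J₁ ⊆ J`: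
`dim C₁|_{J₁} + dim C₁|_{I₁∖J₁} − dim C₁ = dim C|_{J₁} + dim C|_{I∖J₁} − dim C`
(stated in the equivalent subtraction-free form). -/
theorem decomposition_preserves_state_dims [Fintype F]
    (hr : r ≤ k₁) (hr1 : 1 ≤ r)
    (hm : m = (Fintype.card F ^ r - 1) / (Fintype.card F - 1))
    (A : Fin k₁ → Fin a → F) (B : Fin k₁ → Fin b → F) (C' : Fin k₂' → Fin b → F)
    (D : Fin r → Fin m → F) (α : Fin k₁ → Fin r → F)
    (hDrows : LinearIndependent F D)
    (hDcols : ∀ k₁' k₂'', k₁' ≠ k₂'' →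
      LinearIndependent F ![fun i => D i k₁', fun i => D i k₂''])
    (hBtop : LinearIndependent F (fun j : Fin r => B (Fin.castLE hr j)))
    (hα : ∀ i c, B i c = ∑ j : Fin r, α i j * B (Fin.castLE hr j) c)
    (J₁ : Set (Fin k₁ ⊕ Fin a)) :
    finrank F ↥(projAlong (Submodule.span F (Set.range (rowsG1 A D α)))
          ((Sum.inl ∘ Subtype.val : ↥J₁ → (Fin k₁ ⊕ Fin a) ⊕ Fin m))) +
      finrank F ↥(projAlong (Submodule.span F (Set.range (rowsG1 A D α)))
          (Sum.elim (Sum.inl ∘ Subtype.val) Sum.inr :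
            ↥J₁ᶜ ⊕ Fin m → (Fin k₁ ⊕ Fin a) ⊕ Fin m)) +
      finrank F ↥(Submodule.span F (Set.range (rowsG A B C'))) =
    finrank F ↥(projAlong (Submodule.span F (Set.range (rowsG A B C')))
          ((Sum.inl ∘ Subtype.val : ↥J₁ → (Fin k₁ ⊕ Fin a) ⊕ (Fin k₂' ⊕ Fin b)))) +
      finrank F ↥(projAlong (Submodule.span F (Set.range (rowsG A B C')))
          (Sum.elim (Sum.inl ∘ Subtype.val) Sum.inr :
            ↥J₁ᶜ ⊕ (Fin k₂' ⊕ Fin b) → (Fin k₁ ⊕ Fin a) ⊕ (Fin k₂' ⊕ Fin b))) +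
      finrank F ↥(Submodule.span F (Set.range (rowsG1 A D α))) := by
  classical
  -- the common auxiliary row family, whose combination kernel is the key invariant
  set w : Fin k₁ → (↥J₁ᶜ ⊕ Fin r) → F :=
    fun i => Sum.elim (fun t : ↥J₁ᶜ => rowsG1 A D α i (Sum.inl t.1)) (α i) with hw
  -- key equivalence coming from linear independence of the rows of D
  have keyD : ∀ c : Fin k₁ → F,
      (∀ k, ∑ i, c i * (∑ j, α i j * D j k) = 0) ↔ (∀ j, ∑ i, c i * α i j = 0) := by
    intro c
    have swap : ∀ k, ∑ i, c i * (∑ j, α i j * D j k)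
        = ∑ j, (∑ i, c i * α i j) * D j k := by
      intro k
      simp_rw [Finset.mul_sum, Finset.sum_mul, mul_assoc]
      exact Finset.sum_comm
    constructor
    · intro h
      refine Fintype.linearIndependent_iff.mp hDrows (fun j => ∑ i, c i * α i j) ?_
      funext k
      rw [Finset.sum_apply]
      simp only [Pi.smul_apply, smul_eq_mul, Pi.zero_apply]
      rw [← swap k]
      exact h k
    · intro h k
      rw [swap k]
      simp [h]
  -- key equivalence coming from linear independence of the top rows of B
  have keyB : ∀ c : Fin k₁ → F,
      (∀ jb, ∑ i, c i * B i jb = 0) ↔ (∀ j, ∑ i, c i * α i j = 0) := by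
    intro c
    have swap : ∀ jb : Fin b, ∑ i, c i * B i jb
        = ∑ j, (∑ i, c i * α i j) * B (Fin.castLE hr j) jb := by
      intro jb
      calc ∑ i, c i * B i jb
          = ∑ i, c i * ∑ j, α i j * B (Fin.castLE hr j) jb := by simp_rw [← hα]
        _ = _ := by
            simp_rw [Finset.mul_sum, Finset.sum_mul, mul_assoc]
            exact Finset.sum_comm
    constructor
    · intro h
      refine Fintype.linearIndependent_iff.mp hBtop (fun j => ∑ i, c i * α i j) ?_
      funext jb
      rw [Finset.sum_apply]
      simp only [Pi.smul_apply, smul_eq_mul, Pi.zero_apply]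
      rw [← swap jb]
      exact h jb
    · intro h jb
      rw [swap jb]
      simp [h]
  -- (1) the two projections onto J₁ coincide
  have h1 : projAlong (Submodule.span F (Set.range (rowsG1 A D α)))
        ((Sum.inl ∘ Subtype.val : ↥J₁ → (Fin k₁ ⊕ Fin a) ⊕ Fin m))
      = projAlong (Submodule.span F (Set.range (rowsG A B C')))
        ((Sum.inl ∘ Subtype.val : ↥J₁ → (Fin k₁ ⊕ Fin a) ⊕ (Fin k₂' ⊕ Fin b))) := by
    rw [RSumDecomp.projAlong_span, RSumDecomp.projAlong_span]
    apply le_antisymm <;> rw [Submodule.span_le]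
    · rintro _ ⟨i, rfl⟩
      exact Submodule.subset_span ⟨Sum.inl i, rfl⟩
    · rintro _ ⟨i, rfl⟩
      cases i with
      | inl i => exact Submodule.subset_span ⟨i, rfl⟩
      | inr i =>
        have hz : (rowsG A B C' (Sum.inr i)) ∘
            ((Sum.inl ∘ Subtype.val : ↥J₁ → (Fin k₁ ⊕ Fin a) ⊕ (Fin k₂' ⊕ Fin b)))
            = (0 : ↥J₁ → F) := by
          funext t; rfl
        show rowsG A B C' (Sum.inr i) ∘
            ((Sum.inl ∘ Subtype.val : ↥J₁ → (Fin k₁ ⊕ Fin a) ⊕ (Fin k₂' ⊕ Fin b))) ∈ _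
        rw [hz]
        exact Submodule.zero_mem _
  -- (2) dim C₁ = k₁
  have hkG1 : LinearMap.ker (RSumDecomp.comb (rowsG1 A D α)) = ⊥ := by
    rw [LinearMap.ker_eq_bot']
    intro c hc
    funext i
    simpa [RSumDecomp.comb_apply, rowsG1, mul_ite, Finset.sum_ite_eq'] using
      congrFun hc (Sum.inl (Sum.inl i))
  have h3 : finrank F (Submodule.span F (Set.range (rowsG1 A D α))) = k₁ := by
    have := RSumDecomp.finrank_span_add (rowsG1 A D α)
    rw [hkG1] at this
    simpa using this
  -- (3) dim C = k₁ + k₂'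
  have hkG : LinearMap.ker (RSumDecomp.comb (rowsG A B C')) = ⊥ := by
    rw [LinearMap.ker_eq_bot']
    intro c hc
    funext i
    cases i with
    | inl i =>
      simpa [RSumDecomp.comb_apply, rowsG, Fintype.sum_sum_type, mul_ite,
        Finset.sum_ite_eq'] using congrFun hc (Sum.inl (Sum.inl i))
    | inr i =>
      simpa [RSumDecomp.comb_apply, rowsG, Fintype.sum_sum_type, mul_ite,
        Finset.sum_ite_eq'] using congrFun hc (Sum.inr (Sum.inl i))
  have h5 : finrank F (Submodule.span F (Set.range (rowsG A B C'))) = k₁ + k₂' := by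
    have := RSumDecomp.finrank_span_add (rowsG A B C')
    rw [hkG] at this
    simpa using this
  -- (4) the kernel for C₁'s complement projection equals ker (comb w)
  have hkE : LinearMap.ker (RSumDecomp.comb (fun i => rowsG1 A D α i ∘
        (Sum.elim (Sum.inl ∘ Subtype.val) Sum.inr :
          ↥J₁ᶜ ⊕ Fin m → (Fin k₁ ⊕ Fin a) ⊕ Fin m)))
      = LinearMap.ker (RSumDecomp.comb w) := by
    ext c
    simp only [LinearMap.mem_ker]
    constructor
    · intro hc
      funext s
      cases s with
      | inl t => exact congrFun hc (Sum.inl t)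
      | inr j =>
        have hX : ∀ k, ∑ i, c i * (∑ j, α i j * D j k) = 0 := by
          intro k
          simpa [RSumDecomp.comb_apply, rowsG1] using congrFun hc (Sum.inr k)
        simpa [RSumDecomp.comb_apply, hw] using (keyD c).mp hX j
    · intro hc
      funext s
      cases s with
      | inl t => exact congrFun hc (Sum.inl t)
      | inr k =>
        have hα0 : ∀ j, ∑ i, c i * α i j = 0 := fun j => by
          simpa [RSumDecomp.comb_apply, hw] using congrFun hc (Sum.inr j)
        simpa [RSumDecomp.comb_apply, rowsG1] using (keyD c).mpr hα0 k
  have h2 : finrank F (projAlong (Submodule.span F (Set.range (rowsG1 A D α)))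
        (Sum.elim (Sum.inl ∘ Subtype.val) Sum.inr :
          ↥J₁ᶜ ⊕ Fin m → (Fin k₁ ⊕ Fin a) ⊕ Fin m))
      + finrank F (LinearMap.ker (RSumDecomp.comb w)) = k₁ := by
    rw [RSumDecomp.projAlong_span, ← hkE]
    simpa using RSumDecomp.finrank_span_add
      (fun i => rowsG1 A D α i ∘
        (Sum.elim (Sum.inl ∘ Subtype.val) Sum.inr :
          ↥J₁ᶜ ⊕ Fin m → (Fin k₁ ⊕ Fin a) ⊕ Fin m))
  -- (5) the kernel for C's complement projection is extL of ker (comb w)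
  have hkF : LinearMap.ker (RSumDecomp.comb
        (fun i : Fin k₁ ⊕ Fin k₂' => rowsG A B C' i ∘
          (Sum.elim (Sum.inl ∘ Subtype.val) Sum.inr :
            ↥J₁ᶜ ⊕ (Fin k₂' ⊕ Fin b) → (Fin k₁ ⊕ Fin a) ⊕ (Fin k₂' ⊕ Fin b))))
      = Submodule.map RSumDecomp.extL (LinearMap.ker (RSumDecomp.comb w)) := by
    ext x
    simp only [LinearMap.mem_ker, Submodule.mem_map]
    constructor
    · intro hx
      have hd : ∀ i, x (Sum.inr i) = 0 := by
        intro i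
        simpa [RSumDecomp.comb_apply, rowsG, Fintype.sum_sum_type, mul_ite,
          Finset.sum_ite_eq'] using congrFun hx (Sum.inr (Sum.inl i))
      refine ⟨fun i => x (Sum.inl i), ?_, ?_⟩
      · funext s
        cases s with
        | inl t =>
          simpa [RSumDecomp.comb_apply, rowsG, rowsG1, hw, Fintype.sum_sum_type, hd]
            using congrFun hx (Sum.inl t)
        | inr j =>
          have hB0 : ∀ jb, ∑ i, x (Sum.inl i) * B i jb = 0 := by
            intro jb
            simpa [RSumDecomp.comb_apply, rowsG, Fintype.sum_sum_type, hd]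
              using congrFun hx (Sum.inr (Sum.inr jb))
          simpa [RSumDecomp.comb_apply, hw] using (keyB _).mp hB0 j
      · funext s
        cases s with
        | inl i => rfl
        | inr i => simpa [RSumDecomp.extL] using (hd i).symm
    · rintro ⟨c, hc, rfl⟩
      have hα0 : ∀ j, ∑ i, c i * α i j = 0 := fun j => by
        simpa [RSumDecomp.comb_apply, hw] using congrFun hc (Sum.inr j)
      have hU0 : ∀ t : ↥J₁ᶜ, ∑ i, c i * rowsG1 A D α i (Sum.inl t.1) = 0 := fun t => by
        simpa [RSumDecomp.comb_apply, hw] using congrFun hc (Sum.inl t)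
      funext s
      cases s with
      | inl t =>
        simpa [RSumDecomp.comb_apply, RSumDecomp.extL, rowsG, rowsG1,
          Fintype.sum_sum_type] using hU0 t
      | inr y =>
        cases y with
        | inl i =>
          simp [RSumDecomp.comb_apply, RSumDecomp.extL, rowsG, Fintype.sum_sum_type]
        | inr jb =>
          simpa [RSumDecomp.comb_apply, RSumDecomp.extL, rowsG, Fintype.sum_sum_type]
            using (keyB c).mpr hα0 jb
  have h4 : finrank F (projAlong (Submodule.span F (Set.range (rowsG A B C')))
        (Sum.elim (Sum.inl ∘ Subtype.val) Sum.inr :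
          ↥J₁ᶜ ⊕ (Fin k₂' ⊕ Fin b) → (Fin k₁ ⊕ Fin a) ⊕ (Fin k₂' ⊕ Fin b)))
      + finrank F (LinearMap.ker (RSumDecomp.comb w)) = k₁ + k₂' := by
    rw [RSumDecomp.projAlong_span]
    have hmap : finrank F (Submodule.map
          (RSumDecomp.extL (F := F) (ι := Fin k₁) (ι' := Fin k₂'))
          (LinearMap.ker (RSumDecomp.comb w)))
        = finrank F (LinearMap.ker (RSumDecomp.comb w)) := by
      have e := Submodule.equivMapOfInjective
        (RSumDecomp.extL (F := F) (ι := Fin k₁) (ι' := Fin k₂'))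
        RSumDecomp.extL_injective (LinearMap.ker (RSumDecomp.comb w))
      exact e.finrank_eq.symm
    have := RSumDecomp.finrank_span_add
      (fun i : Fin k₁ ⊕ Fin k₂' => rowsG A B C' i ∘
        (Sum.elim (Sum.inl ∘ Subtype.val) Sum.inr :
          ↥J₁ᶜ ⊕ (Fin k₂' ⊕ Fin b) → (Fin k₁ ⊕ Fin a) ⊕ (Fin k₂' ⊕ Fin b)))
    rw [hkF, hmap] at this
    simpa using this
  rw [h1, h3, h5]
  omega


end
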